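/- Suppose τ_{2,1} > 0 and β_2((1−τ_{2,0})w_{2,0} + γ_{2,0}T_0)/(1+β_2) + β_1((1−τ_{1,0})w_{1,0} + γ_{1,0}T_0)/(1+β_1) > 0. Then the closed-form equilibrium aggregate capital K_1 = [β_2((1−τ_{2,0})w_{2,0} + γ_{2,0}T_0)/(1+β_2) + β_1((1−τ_{1,0})w_{1,0} + γ_{1,0}T_0)/(1+β_1)] / [1 + (γ_{2,1}/(1+β_2) + γ_{1,1}/(1+β_1))·τ_{2,1}/(1−τ_{2,1})] is strictly decreasing in γ_{1,1} and strictly decreasing in γ_{2,1} (all other parameters held fixed). -/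
import Mathlib


open Set

/-- Date-0 government revenue `T0 = τ10·w1 + τ20·w2`. -/
noncomputable def T0 (w1 w2 τ10 τ20 : ℝ) : ℝ := τ10 * w1 + τ20 * w2

/-- Closed-form equilibrium aggregate capital of the two-agent log-linear
economy (Proposition 4.1):
`K1 = [β2((1−τ20)w2 + γ20 T0)/(1+β2) + β1((1−τ10)w1 + γ10 T0)/(1+β1)] /
[1 + (γ21/(1+β2) + γ11/(1+β1))·τ21/(1−τ21)]`. -/
noncomputable def K1 (w1 w2 β1 β2 τ10 τ20 τ21 γ10 γ20 γ11 γ21 : ℝ) : ℝ :=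
  (β2 * ((1 - τ20) * w2 + γ20 * T0 w1 w2 τ10 τ20) / (1 + β2) +
    β1 * ((1 - τ10) * w1 + γ10 * T0 w1 w2 τ10 τ20) / (1 + β1)) /
  (1 + (γ21 / (1 + β2) + γ11 / (1 + β1)) * (τ21 / (1 - τ21)))

/-- Closed-form equilibrium date-1 GDP of the two-agent log-linear economy
(Proposition 4.1): `Y1 = (1 − τ21 γc1)(1 + a2 γd T0) A2 K1` with
`γc1 = 1 − γ11 − γ21`. -/
noncomputable def Y1 (w1 w2 β1 β2 τ10 τ20 τ21 γ10 γ20 γ11 γ21 γd A2 a2 : ℝ) : ℝ :=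
  (1 - τ21 * (1 - γ11 - γ21)) * (1 + a2 * (γd * T0 w1 w2 τ10 τ20)) * A2 *
    K1 w1 w2 β1 β2 τ10 τ20 τ21 γ10 γ20 γ11 γ21

/-- if `τ21 > 0` and the numerator
`β2((1−τ20)w2 + γ20 T0)/(1+β2) + β1((1−τ10)w1 + γ10 T0)/(1+β1)` is positive,
then the closed-form equilibrium aggregate capital `K1` is strictly decreasing
in `γ11` and strictly decreasing in `γ21` (all other parameters held fixed). -/
theorem K1_strictAnti_in_date1_transfers
    (w1 w2 β1 β2 τ10 τ20 τ11 τ21 γ10 γ20 γd : ℝ)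
    (hw1 : 0 < w1) (hw2 : 0 < w2)
    (hβ1 : β1 ∈ Set.Ioo (0 : ℝ) 1) (hβ2 : β2 ∈ Set.Ioo (0 : ℝ) 1)
    (hτ10 : τ10 ∈ Set.Ico (0 : ℝ) 1) (hτ20 : τ20 ∈ Set.Ico (0 : ℝ) 1)
    (hτ11 : τ11 ∈ Set.Ico (0 : ℝ) 1) (hτ21 : τ21 ∈ Set.Ico (0 : ℝ) 1)
    (hγ10 : γ10 ∈ Set.Icc (0 : ℝ) 1) (hγ20 : γ20 ∈ Set.Icc (0 : ℝ) 1)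
    (hγd : γd ∈ Set.Icc (0 : ℝ) 1) (hsum0 : γ10 + γ20 + γd ≤ 1)
    (hτ21pos : 0 < τ21)
    (hnum : 0 < β2 * ((1 - τ20) * w2 + γ20 * T0 w1 w2 τ10 τ20) / (1 + β2) +
             β1 * ((1 - τ10) * w1 + γ10 * T0 w1 w2 τ10 τ20) / (1 + β1)) :
    (∀ γ11 γ11' γ21 : ℝ, γ11 ∈ Set.Icc (0 : ℝ) 1 → γ11' ∈ Set.Icc (0 : ℝ) 1 →
      γ21 ∈ Set.Icc (0 : ℝ) 1 → γ11 + γ21 ≤ 1 → γ11' + γ21 ≤ 1 →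
      γ11 < γ11' →
      K1 w1 w2 β1 β2 τ10 τ20 τ21 γ10 γ20 γ11' γ21 <
        K1 w1 w2 β1 β2 τ10 τ20 τ21 γ10 γ20 γ11 γ21) ∧
    (∀ γ11 γ21 γ21' : ℝ, γ11 ∈ Set.Icc (0 : ℝ) 1 → γ21 ∈ Set.Icc (0 : ℝ) 1 →
      γ21' ∈ Set.Icc (0 : ℝ) 1 → γ11 + γ21 ≤ 1 → γ11 + γ21' ≤ 1 →
      γ21 < γ21' →
      K1 w1 w2 β1 β2 τ10 τ20 τ21 γ10 γ20 γ11 γ21' <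
        K1 w1 w2 β1 β2 τ10 τ20 τ21 γ10 γ20 γ11 γ21) := by

  have hb1 : (0:ℝ) < 1 + β1 := by linarith [hβ1.1]
  have hb2 : (0:ℝ) < 1 + β2 := by linarith [hβ2.1]
  have ht : (0:ℝ) < τ21 / (1 - τ21) := by
    apply div_pos hτ21pos; linarith [hτ21.2]
  constructor
  · intro γ11 γ11' γ21 h11 h11' h21 _ _ hlt
    unfold K1
    apply div_lt_div_of_pos_left hnum
    · have : 0 ≤ (γ21 / (1 + β2) + γ11 / (1 + β1)) * (τ21 / (1 - τ21)) := by
        apply mul_nonneg (add_nonneg (div_nonneg h21.1 hb2.le) (div_nonneg h11.1 hb1.le)) ht.le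
      linarith
    · have : γ11 / (1 + β1) < γ11' / (1 + β1) := by
        exact div_lt_div_of_pos_right hlt hb1
      nlinarith
  · intro γ11 γ21 γ21' h11 h21 h21' _ _ hlt
    unfold K1
    apply div_lt_div_of_pos_left hnum
    · have : 0 ≤ (γ21 / (1 + β2) + γ11 / (1 + β1)) * (τ21 / (1 - τ21)) := by
        apply mul_nonneg (add_nonneg (div_nonneg h21.1 hb2.le) (div_nonneg h11.1 hb1.le)) ht.le
      linarith
    · have : γ21 / (1 + β2) < γ21' / (1 + β2) := by
        exact div_lt_div_of_pos_right hlt hb2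
      nlinarith
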